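/- Let p be a prime, and suppose f ∈ k[x₁,…,xₙ] and g ∈ k[y₁,…,yₘ] over a field k of characteristic p satisfy f^{p−1} ∉ (x₁^p,…,xₙ^p) and g^{p−1} ∉ (y₁^p,…,yₘ^p). Then (fg)^{p−1} ∉ (x₁^p,…,xₙ^p, y₁^p,…,yₘ^p) in k[x₁,…,xₙ,y₁,…,yₘ]. -/

import Mathlib

open MvPolynomial

lemma span_Xpow_eq_monomial_image (k : Type*) [CommRing k] (σ : Type*) (p : ℕ) :
    Ideal.span (Set.range fun v : σ => (X v : MvPolynomial σ k) ^ p) =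
      Ideal.span ((fun s => monomial s (1 : k)) ''
        (Set.range fun v : σ => Finsupp.single v p)) := by
  congr 1
  ext h
  simp only [Set.mem_range, Set.mem_image, exists_exists_eq_and, X_pow_eq_monomial]

lemma not_mem_span_Xpow_iff {k : Type*} [CommRing k] {σ : Type*} (p : ℕ)
    (h : MvPolynomial σ k) :
    h ∉ Ideal.span (Set.range fun v : σ => (X v : MvPolynomial σ k) ^ p) ↔
      ∃ d ∈ h.support, ∀ v, d v < p := by
  classical
  rw [span_Xpow_eq_monomial_image, mem_ideal_span_monomial_image]
  push_neg
  refine exists_congr fun d => and_congr_right fun _ => ?_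
  constructor
  · intro H v
    have := H (Finsupp.single v p) ⟨v, rfl⟩
    by_contra hle
    exact this (by
      intro u
      rcases eq_or_ne u v with rfl | hu
      · simpa using not_lt.mp hle
      · simp [Finsupp.single_apply, Ne.symm hu])
  · rintro H s ⟨v, rfl⟩ hle
    have := hle v
    simp only [Finsupp.single_apply, if_pos rfl] at this
    exact absurd this (not_le.mpr (H v))

lemma coeff_mul_rename_disjoint {k : Type*} [CommRing k] {n m : ℕ}
    (F : MvPolynomial (Fin n) k) (G : MvPolynomial (Fin m) k)
    (a : Fin n →₀ ℕ) (b : Fin m →₀ ℕ) :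
    coeff (a.mapDomain Sum.inl + b.mapDomain Sum.inr)
      (rename (Sum.inl : Fin n → Fin n ⊕ Fin m) F *
        rename (Sum.inr : Fin m → Fin n ⊕ Fin m) G) = coeff a F * coeff b G := by
  classical
  rw [coeff_mul]
  rw [Finset.sum_eq_single (a.mapDomain Sum.inl, b.mapDomain Sum.inr)]
  · rw [coeff_rename_mapDomain _ Sum.inl_injective, coeff_rename_mapDomain _ Sum.inr_injective]
  · rintro ⟨u, v⟩ huv hne
    rw [Finset.HasAntidiagonal.mem_antidiagonal] at huv
    by_contra hzero
    have hu : coeff u (rename (Sum.inl : Fin n → Fin n ⊕ Fin m) F) ≠ 0 := by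
      intro h0; exact hzero (by rw [h0, zero_mul])
    have hv : coeff v (rename (Sum.inr : Fin m → Fin n ⊕ Fin m) G) ≠ 0 := by
      intro h0; exact hzero (by rw [h0, mul_zero])
    obtain ⟨a', ha', -⟩ := coeff_rename_ne_zero _ _ _ hu
    obtain ⟨b', hb', -⟩ := coeff_rename_ne_zero _ _ _ hv
    subst ha' hb'
    have ha : a' = a := by
      ext i
      have := DFunLike.congr_fun huv (Sum.inl i)
      simpa [Finsupp.mapDomain_apply Sum.inl_injective,
        Finsupp.mapDomain_notin_range (f := (Sum.inr : Fin m → Fin n ⊕ Fin m)) _ (Sum.inl i)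
          (by simp)] using this
    have hb : b' = b := by
      ext j
      have := DFunLike.congr_fun huv (Sum.inr j)
      simpa [Finsupp.mapDomain_apply Sum.inr_injective,
        Finsupp.mapDomain_notin_range (f := (Sum.inl : Fin n → Fin n ⊕ Fin m)) _ (Sum.inr j)
          (by simp)] using this
    exact hne (by rw [ha, hb])
  · intro h
    simp [Finset.mem_antidiagonal] at h

/-- Fedder's criterion is preserved by products in disjoint variables:
if `f^{p−1} ∉ (xᵢ^p)` and `g^{p−1} ∉ (yⱼ^p)`, then
`(fg)^{p−1} ∉ (xᵢ^p, yⱼ^p)` in the combined polynomial ring. -/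
theorem fedder_product_disjoint_variables
    (p : ℕ) (hp : p.Prime)
    (k : Type*) [Field k] [CharP k p] (n m : ℕ)
    (f : MvPolynomial (Fin n) k) (g : MvPolynomial (Fin m) k)
    (hf : f ^ (p - 1) ∉ Ideal.span (Set.range fun i : Fin n => (X i : MvPolynomial (Fin n) k) ^ p))
    (hg : g ^ (p - 1) ∉ Ideal.span (Set.range fun j : Fin m => (X j : MvPolynomial (Fin m) k) ^ p)) :
    (rename (Sum.inl : Fin n → Fin n ⊕ Fin m) f *
        rename (Sum.inr : Fin m → Fin n ⊕ Fin m) g) ^ (p - 1) ∉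
      Ideal.span (Set.range fun v : Fin n ⊕ Fin m =>
        (X v : MvPolynomial (Fin n ⊕ Fin m) k) ^ p) := by
  classical
  obtain ⟨a, haS, ha⟩ := (not_mem_span_Xpow_iff p _).mp hf
  obtain ⟨b, hbS, hb⟩ := (not_mem_span_Xpow_iff p _).mp hg
  rw [not_mem_span_Xpow_iff]
  refine ⟨a.mapDomain Sum.inl + b.mapDomain Sum.inr, ?_, ?_⟩
  · rw [MvPolynomial.mem_support_iff, mul_pow, ← map_pow, ← map_pow,
      coeff_mul_rename_disjoint]
    exact mul_ne_zero (MvPolynomial.mem_support_iff.mp haS)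
      (MvPolynomial.mem_support_iff.mp hbS)
  · rintro (i | j)
    · simpa [Finsupp.mapDomain_apply Sum.inl_injective,
        Finsupp.mapDomain_notin_range (f := (Sum.inr : Fin m → Fin n ⊕ Fin m)) _ (Sum.inl i)
          (by simp)] using ha i
    · simpa [Finsupp.mapDomain_apply Sum.inr_injective,
        Finsupp.mapDomain_notin_range (f := (Sum.inl : Fin n → Fin n ⊕ Fin m)) _ (Sum.inr j)
          (by simp)] using hb j
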